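/- (Proposition 4, sliCQ approximates the full-length CQ-NSGT.) Let L, N ∈ ℕ with 2N ∣ L, let I_K be a finite index set, and for each k ∈ I_K let a_k ∈ ℕ with a_k ∣ N and ǧ^L_k ∈ ℂ^L, with 2N-periodization ǧ_k ∈ ℂ^{2N}, ǧ_k[l] = Σ_{j=0}^{L/(2N)−1} ǧ^L_k[(l + 2jN) mod L]. Let h₀ ∈ ℂ^L vanish outside {−N,…,N−1} mod L and satisfy Σ_{m=0}^{L/N−1} h₀[l − mN] = 1 for all l; set h_m = T_{mN} h₀ (m mod L/N). For f ∈ ℂ^L define the full-length coefficients c_{n,k} = ⟨f, T_{n a_k} ǧ^L_k⟩, the slices f^m[j] = f[(j+(m−1)N) mod L]·h₀[(j−N) mod L] ∈ ℂ^{2N}, the slice coefficients c^m_{ν,k} = ⟨f^m, T_{ν a_k} ǧ_k⟩_{ℂ^{2N}}, and, for n = m·(N/a_k) + n^s with 0 ≤ n^s < N/a_k, the two sliCQ layers s⁰_{n,k} = c^{m}_{n^s+N/a_k, k} and s¹_{n,k} = c^{m+1}_{n^s, k}. Then for all such n and all k ∈ I_K, |s⁰_{n,k} + s¹_{n,k}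 − c_{n,k}| ≤ ‖f‖₂ · ( ‖(1 − h₀ − h₁)·T_{n^s a_k} ǧ^L_k‖₂ + ‖(h₀ + h₁)·Σ_{j=1}^{L/(2N)−1} T_{n^s a_k + 2jN} ǧ^L_k‖₂ ). -/

import Mathlib

/-- The ℓ² norm on ℂ^L: ‖f‖₂ = (Σ_{l=0}^{L-1} |f[l]|²)^{1/2}. -/
noncomputable def norm2 (L : ℕ) (f : ZMod L → ℂ) : ℝ :=
  Real.sqrt (∑ l ∈ Finset.range L, ‖f (l : ZMod L)‖ ^ 2)

namespace SlicqAux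

open Finset

lemma sum_range_zmod {M : ℕ} [NeZero M] {β : Type*} [AddCommMonoid β] (F : ZMod M → β) :
    ∑ l ∈ Finset.range M, F (l : ZMod M) = ∑ l : ZMod M, F l := by
  refine Finset.sum_nbij' (i := fun l => (l : ZMod M)) (j := fun x => x.val) ?_ ?_ ?_ ?_ ?_
  · intro l hl; exact Finset.mem_univ _
  · intro x _; exact Finset.mem_range.mpr (ZMod.val_lt x)
  · intro l hl; exact ZMod.val_cast_of_lt (Finset.mem_range.mp hl)
  · intro x _; exact ZMod.natCast_zmod_val x
  · intro l _; rfl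

lemma norm2_univ {M : ℕ} [NeZero M] (f : ZMod M → ℂ) :
    norm2 M f = Real.sqrt (∑ l : ZMod M, ‖f l‖ ^ 2) := by
  unfold norm2
  rw [sum_range_zmod (fun l => ‖f l‖ ^ 2)]

lemma norm2_comp_sub {M : ℕ} [NeZero M] (f : ZMod M → ℂ) (x : ZMod M) :
    norm2 M (fun l => f (l - x)) = norm2 M f := by
  rw [norm2_univ, norm2_univ]
  congr 1
  exact Fintype.sum_equiv (Equiv.subRight x) _ _ (fun l => rfl)

lemma norm2_congr_abs {M : ℕ} (f g : ZMod M → ℂ)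
    (h : ∀ l, ‖f l‖ = ‖g l‖) : norm2 M f = norm2 M g := by
  unfold norm2
  congr 1
  exact Finset.sum_congr rfl fun l _ => by rw [h]

lemma abs_sum_mul_le {M : ℕ} [NeZero M] (f z : ZMod M → ℂ) :
    ‖∑ l : ZMod M, f l * z l‖ ≤ norm2 M f * norm2 M z := by
  have key := norm_inner_le_norm (𝕜 := ℂ)
      ((WithLp.equiv 2 (ZMod M → ℂ)).symm (fun l => (starRingEnd ℂ) (z l)))
      ((WithLp.equiv 2 (ZMod M → ℂ)).symm f)
  rw [PiLp.inner_apply] at key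
  simp only [RCLike.inner_apply'] at key
  have h1 : (∑ l : ZMod M, f l * z l)
      = ∑ l : ZMod M, (starRingEnd ℂ)
          (((WithLp.equiv 2 (ZMod M → ℂ)).symm (fun l => (starRingEnd ℂ) (z l))) l)
          * ((WithLp.equiv 2 (ZMod M → ℂ)).symm f) l := by
    refine Finset.sum_congr rfl fun l _ => ?_
    simp [mul_comm]
  rw [h1]
  refine key.trans (le_of_eq ?_)
  have e1 : ‖(WithLp.equiv 2 (ZMod M → ℂ)).symm (fun l => (starRingEnd ℂ) (z l))‖ = norm2 M z := by
    rw [EuclideanSpace.norm_eq, norm2_univ]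
    congr 1
    refine Finset.sum_congr rfl fun l _ => ?_
    simp
  have e2 : ‖(WithLp.equiv 2 (ZMod M → ℂ)).symm f‖ = norm2 M f := by
    rw [EuclideanSpace.norm_eq, norm2_univ]
    simp
  rw [e1, e2, mul_comm]

end SlicqAux

namespace SlicqAux

open Finset

noncomputable def per (L N : ℕ) (g : ZMod L → ℂ) (y : ZMod L) : ℂ :=
  ∑ p ∈ Finset.range (L / (2 * N)), g (y + ((2 * p * N : ℕ) : ZMod L))

lemma per_shift {L N : ℕ} (hdvd : 2 * N ∣ L) (g : ZMod L → ℂ) (y : ZMod L) :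
    per L N g (y + ((2 * N : ℕ) : ZMod L)) = per L N g y := by
  unfold per
  set P := L / (2 * N) with hPdef
  set F : ℕ → ℂ := fun p => g (y + ((2 * p * N : ℕ) : ZMod L)) with hF
  have h1 : ∀ p, g (y + ((2 * N : ℕ) : ZMod L) + ((2 * p * N : ℕ) : ZMod L)) = F (p + 1) := by
    intro p
    simp only [hF]
    congr 1
    push_cast
    ring
  have hFP : F P = F 0 := by
    simp only [hF]
    congr 1
    have h2PN : (2 * P * N : ℕ) = L := by
      have h := Nat.mul_div_cancel' hdvd
      calc 2 * P * N = 2 * N * P := by ring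
        _ = L := h
    rw [h2PN]
    simp
  calc ∑ p ∈ Finset.range P, g (y + ((2 * N : ℕ) : ZMod L) + ((2 * p * N : ℕ) : ZMod L))
      = ∑ p ∈ Finset.range P, F (p + 1) := Finset.sum_congr rfl fun p _ => h1 p
    _ = ∑ p ∈ Finset.range P, F p := by
        have e1 := Finset.sum_range_succ' F P
        have e2 := Finset.sum_range_succ F P
        rw [hFP] at e2
        linear_combination e2 - e1

lemma per_add_mul {L N : ℕ} (hdvd : 2 * N ∣ L) (g : ZMod L → ℂ) (y : ZMod L) (t : ℕ) :
    per L N g (y + ((2 * N * t : ℕ) : ZMod L)) = per L N g y := by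
  induction t with
  | zero => simp
  | succ t ih =>
    have h : ((2 * N * (t + 1) : ℕ) : ZMod L) = ((2 * N * t : ℕ) : ZMod L) + ((2 * N : ℕ) : ZMod L) := by
      push_cast; ring
    rw [h, ← add_assoc, per_shift hdvd, ih]

lemma per_congr {L N : ℕ} [NeZero L] [NeZero (2 * N)] (hdvd : 2 * N ∣ L) (g : ZMod L → ℂ)
    {y z : ZMod L}
    (h : ZMod.castHom hdvd (ZMod (2 * N)) y = ZMod.castHom hdvd (ZMod (2 * N)) z) :
    per L N g y = per L N g z := by
  have hd : ZMod.castHom hdvd (ZMod (2 * N)) (y - z) = 0 := by rw [map_sub, h, sub_self]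
  have hv : (((y - z).val : ℕ) : ZMod (2 * N)) = 0 := by
    rw [ZMod.natCast_val]
    rwa [ZMod.castHom_apply] at hd
  obtain ⟨t, ht⟩ := (ZMod.natCast_eq_zero_iff _ _).mp hv
  have hy : y = z + ((2 * N * t : ℕ) : ZMod L) := by
    rw [← ht, ZMod.natCast_zmod_val]
    ring
  rw [hy]
  exact per_add_mul hdvd g z t

end SlicqAux

namespace SlicqAux

lemma sum_Ico_reflect {L N : ℕ} (hdvd : 2 * N ∣ L) (g : ZMod L → ℂ) (y : ZMod L) :
    ∑ p ∈ Finset.Ico 1 (L / (2 * N)), g (y + ((2 * p * N : ℕ) : ZMod L))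
      = ∑ p ∈ Finset.Ico 1 (L / (2 * N)), g (y - ((2 * p * N : ℕ) : ZMod L)) := by
  set P := L / (2 * N) with hPdef
  have hPL : (2 * P * N : ℕ) = L := by
    have h := Nat.mul_div_cancel' hdvd
    calc 2 * P * N = 2 * N * P := by ring
      _ = L := h
  refine Finset.sum_nbij' (i := fun p => P - p) (j := fun p => P - p) ?_ ?_ ?_ ?_ ?_
  · intro p hp; rw [Finset.mem_Ico] at *; omega
  · intro p hp; rw [Finset.mem_Ico] at *; omega
  · intro p hp; rw [Finset.mem_Ico] at hp; omega
  · intro p hp; rw [Finset.mem_Ico] at hp; omega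
  · intro p hp
    rw [Finset.mem_Ico] at hp
    obtain ⟨q, hq⟩ := Nat.exists_eq_add_of_le (le_of_lt hp.2)
    have hPp : P - p = q := by omega
    rw [hPp]
    have hzero : ((2 * p * N : ℕ) : ZMod L) + ((2 * q * N : ℕ) : ZMod L) = 0 := by
      have hsum : (2 * p * N) + (2 * q * N) = L := by rw [← hPL, hq]; ring
      rw [← Nat.cast_add, hsum, ZMod.natCast_self]
    congr 1
    linear_combination hzero

end SlicqAux

namespace SlicqAux

lemma slice_formula {L N : ℕ} [NeZero L] [NeZero (2 * N)] (hdvd : 2 * N ∣ L)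
    (f h0 g : ZMod L → ℂ) (gp : ZMod (2 * N) → ℂ)
    (hgp : ∀ l : ZMod (2 * N), gp l = per L N g ((l.val : ZMod L)))
    (hsupp : ∀ l : ZMod L, l ∉ (Finset.range (2 * N)).image
        (fun i : ℕ => (i : ZMod L) - (N : ZMod L)) → h0 l = 0)
    (τ : ZMod L) (b : ℕ) :
    (∑ j ∈ Finset.range (2 * N),
      f (((j : ZMod (2 * N)).val : ZMod L) + τ) *
        h0 (((j : ZMod (2 * N)).val : ZMod L) - (N : ZMod L)) *
        (starRingEnd ℂ) (gp ((j : ZMod (2 * N)) - ((b : ℕ) : ZMod (2 * N)))))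
      = ∑ l : ZMod L, f l * h0 (l - τ - (N : ZMod L)) *
          (starRingEnd ℂ) (per L N g (l - τ - ((b : ℕ) : ZMod L))) := by
  have h2NL : 2 * N ≤ L := Nat.le_of_dvd (Nat.pos_of_ne_zero (NeZero.ne L)) hdvd
  have hproj : ∀ x : ZMod (2 * N), ZMod.castHom hdvd (ZMod (2 * N)) ((x.val : ZMod L)) = x := by
    intro x
    rw [map_natCast, ZMod.natCast_zmod_val]
  set F : ZMod L → ℂ := fun l => f (l + τ) * h0 (l - (N : ZMod L)) *
      (starRingEnd ℂ) (per L N g (l - ((b : ℕ) : ZMod L))) with hF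
  have step1 : ∀ j ∈ Finset.range (2 * N),
      f (((j : ZMod (2 * N)).val : ZMod L) + τ) *
        h0 (((j : ZMod (2 * N)).val : ZMod L) - (N : ZMod L)) *
        (starRingEnd ℂ) (gp ((j : ZMod (2 * N)) - ((b : ℕ) : ZMod (2 * N))))
      = F ((j : ZMod L)) := by
    intro j hj
    have hval : ((j : ZMod (2 * N))).val = j := ZMod.val_cast_of_lt (Finset.mem_range.mp hj)
    have hper : gp ((j : ZMod (2 * N)) - ((b : ℕ) : ZMod (2 * N)))
        = per L N g ((j : ZMod L) - ((b : ℕ) : ZMod L)) := by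
      rw [hgp]
      apply per_congr hdvd
      rw [hproj, map_sub, map_natCast, map_natCast]
    rw [hval, hper, hF]
  have hinj : ∀ x ∈ Finset.range (2 * N), ∀ y ∈ Finset.range (2 * N),
      (x : ZMod L) = (y : ZMod L) → x = y := by
    intro x hx y hy hxy
    have h1 : ((x : ZMod L)).val = x := ZMod.val_cast_of_lt (by
      have := Finset.mem_range.mp hx; omega)
    have h2 : ((y : ZMod L)).val = y := ZMod.val_cast_of_lt (by
      have := Finset.mem_range.mp hy; omega)
    rw [← h1, ← h2, hxy]
  calc (∑ j ∈ Finset.range (2 * N),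
      f (((j : ZMod (2 * N)).val : ZMod L) + τ) *
        h0 (((j : ZMod (2 * N)).val : ZMod L) - (N : ZMod L)) *
        (starRingEnd ℂ) (gp ((j : ZMod (2 * N)) - ((b : ℕ) : ZMod (2 * N)))))
      = ∑ j ∈ Finset.range (2 * N), F ((j : ZMod L)) := Finset.sum_congr rfl step1
    _ = ∑ l ∈ (Finset.range (2 * N)).image (fun j : ℕ => (j : ZMod L)), F l :=
        (Finset.sum_image hinj).symm
    _ = ∑ l : ZMod L, F l := by
        refine Finset.sum_subset (Finset.subset_univ _) ?_
        intro l _ hl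
        have hz : h0 (l - (N : ZMod L)) = 0 := by
          apply hsupp
          intro hmem
          apply hl
          obtain ⟨i, hi, hli⟩ := Finset.mem_image.mp hmem
          have : l = (i : ZMod L) := by linear_combination -hli
          rw [Finset.mem_image]
          exact ⟨i, hi, this.symm⟩
        rw [hF]
        simp [hz]
    _ = ∑ l : ZMod L, F (l - τ) :=
        (Fintype.sum_equiv (Equiv.subRight τ) _ _ (fun l => rfl)).symm
    _ = ∑ l : ZMod L, f l * h0 (l - τ - (N : ZMod L)) *
          (starRingEnd ℂ) (per L N g (l - τ - ((b : ℕ) : ZMod L))) := by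
        refine Finset.sum_congr rfl fun l _ => ?_
        have hl : l - τ + τ = l := by ring
        show f (l - τ + τ) * h0 (l - τ - (N : ZMod L)) *
          (starRingEnd ℂ) (per L N g (l - τ - ((b : ℕ) : ZMod L))) = _
        rw [hl]

end SlicqAux


/-- Proposition 4: the sliCQ coefficients approximate the full-length CQ-NSGT
coefficients:  |s⁰_{n,k} + s¹_{n,k} - c_{n,k}|
  ≤ ‖f‖₂·(‖(1-h₀-h₁)·T_{n^s a_k} ǧ^L_k‖₂ + ‖(h₀+h₁)·Σ_{j=1}^{L/(2N)-1} T_{n^s a_k+2jN} ǧ^L_k‖₂). -/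
theorem slicq_stmt12 {L N : ℕ} (hL : 1 ≤ L) (hN : 1 ≤ N) (hdvd : 2 * N ∣ L)
    {ι : Type*} [Fintype ι]
    (a : ι → ℕ) (ha : ∀ k, a k ∣ N)
    (gL : ι → ZMod L → ℂ) (gp : ι → ZMod (2 * N) → ℂ)
    (hgp : ∀ (k : ι) (l : ZMod (2 * N)),
      gp k l = ∑ j ∈ Finset.range (L / (2 * N)), gL k ((l.val : ZMod L) + ((2 * j * N : ℕ) : ZMod L)))
    (h0 : ZMod L → ℂ)
    (hsupp : ∀ l : ZMod L,
      l ∉ (Finset.range (2 * N)).image (fun i : ℕ => (i : ZMod L) - (N : ZMod L)) → h0 l = 0)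
    (hpart : ∀ l : ZMod L, ∑ m ∈ Finset.range (L / N), h0 (l - ((m * N : ℕ) : ZMod L)) = 1)
    (f : ZMod L → ℂ)
    -- full-length coefficients c_{n,k} = ⟨f, T_{n a_k} ǧ^L_k⟩
    (c : ℕ → ι → ℂ)
    (hc : ∀ (n : ℕ) (k : ι),
      c n k = ∑ l ∈ Finset.range L,
        f (l : ZMod L) * (starRingEnd ℂ) (gL k ((l : ZMod L) - ((n * a k : ℕ) : ZMod L))))
    -- slices f^m[j] = f[j+(m-1)N]·h₀[j-N]
    (fs : ℕ → ZMod (2 * N) → ℂ)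
    (hfs : ∀ (m : ℕ) (j : ZMod (2 * N)),
      fs m j = f ((j.val : ZMod L) + ((((m : ℤ) - 1) * (N : ℤ) : ℤ) : ZMod L)) *
        h0 ((j.val : ZMod L) - (N : ZMod L)))
    -- slice coefficients c^m_{ν,k} = ⟨f^m, T_{ν a_k} ǧ_k⟩
    (cs : ℕ → ℕ → ι → ℂ)
    (hcs : ∀ (m ν : ℕ) (k : ι),
      cs m ν k = ∑ j ∈ Finset.range (2 * N),
        fs m (j : ZMod (2 * N)) *
          (starRingEnd ℂ) (gp k ((j : ZMod (2 * N)) - ((ν * a k : ℕ) : ZMod (2 * N)))))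
    (k : ι) (m : ℕ) (hm : m < L / N) (ns : ℕ) (hns : ns < N / a k)
    (n : ℕ) (hn : n = m * (N / a k) + ns) :
    ‖cs m (ns + N / a k) k + cs (m + 1) ns k - c n k‖
      ≤ norm2 L f *
        (norm2 L (fun l : ZMod L =>
            (1 - h0 l - h0 (l - (N : ZMod L))) * gL k (l - ((ns * a k : ℕ) : ZMod L)))
          + norm2 L (fun l : ZMod L =>
              (h0 l + h0 (l - (N : ZMod L))) *
                ∑ j ∈ Finset.Ico 1 (L / (2 * N)),
                  gL k (l - ((ns * a k + 2 * j * N : ℕ) : ZMod L)))) := by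
  haveI : NeZero L := ⟨by omega⟩
  haveI : NeZero (2 * N) := ⟨by omega⟩
  have h2NL : 2 * N ≤ L := Nat.le_of_dvd (by omega) hdvd
  have hP1 : 1 ≤ L / (2 * N) := (Nat.one_le_div_iff (by omega)).mpr h2NL
  set α : ZMod L := ((ns * a k : ℕ) : ZMod L) with hα
  set μ : ZMod L := ((m * N : ℕ) : ZMod L) with hμ
  set rest : ZMod L → ℂ := fun x => ∑ p ∈ Finset.Ico 1 (L / (2 * N)),
      gL k (x + ((2 * p * N : ℕ) : ZMod L)) with hrest
  have per_split : ∀ x : ZMod L, SlicqAux.per L N (gL k) x = gL k x + rest x := by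
    intro x
    unfold SlicqAux.per
    rw [Finset.range_eq_Ico, Finset.sum_eq_sum_Ico_succ_bot hP1]
    have h00 : ((2 * 0 * N : ℕ) : ZMod L) = 0 := by norm_num
    rw [h00, add_zero]
  have hgp' : ∀ l : ZMod (2 * N), gp k l = SlicqAux.per L N (gL k) ((l.val : ZMod L)) :=
    fun l => hgp k l
  -- slice coefficient computations
  have hs0 : cs m (ns + N / a k) k
      = ∑ l : ZMod L, f l * h0 (l - μ) *
          (starRingEnd ℂ) (SlicqAux.per L N (gL k) (l - μ - α)) := by
    rw [hcs]
    simp only [hfs]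
    rw [SlicqAux.slice_formula hdvd f h0 (gL k) (gp k) hgp' hsupp
      ((((m : ℤ) - 1) * (N : ℤ) : ℤ) : ZMod L) ((ns + N / a k) * a k)]
    refine Finset.sum_congr rfl fun l _ => ?_
    have h1 : l - ((((m : ℤ) - 1) * (N : ℤ) : ℤ) : ZMod L) - (N : ZMod L) = l - μ := by
      rw [hμ]; push_cast; ring
    have h2 : l - ((((m : ℤ) - 1) * (N : ℤ) : ℤ) : ZMod L)
        - (((ns + N / a k) * a k : ℕ) : ZMod L) = l - μ - α := by
      have hna : (ns + N / a k) * a k = ns * a k + N := by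
        rw [add_mul, Nat.div_mul_cancel (ha k)]
      rw [hna, hμ, hα]; push_cast; ring
    rw [h1, h2]
  have hs1 : cs (m + 1) ns k
      = ∑ l : ZMod L, f l * h0 (l - μ - (N : ZMod L)) *
          (starRingEnd ℂ) (SlicqAux.per L N (gL k) (l - μ - α)) := by
    rw [hcs]
    simp only [hfs]
    rw [SlicqAux.slice_formula hdvd f h0 (gL k) (gp k) hgp' hsupp
      (((((m + 1 : ℕ) : ℤ) - 1) * (N : ℤ) : ℤ) : ZMod L) (ns * a k)]
    refine Finset.sum_congr rfl fun l _ => ?_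
    have h2 : l - (((((m + 1 : ℕ) : ℤ) - 1) * (N : ℤ) : ℤ) : ZMod L)
        - ((ns * a k : ℕ) : ZMod L) = l - μ - α := by
      rw [hμ, hα]; push_cast; ring
    have h3 : l - (((((m + 1 : ℕ) : ℤ) - 1) * (N : ℤ) : ℤ) : ZMod L)
        - (N : ZMod L) = l - μ - (N : ZMod L) := by
      rw [hμ]; push_cast; ring
    rw [h2, h3]
  -- full-length coefficient
  have hcn : c n k = ∑ l : ZMod L, f l * (starRingEnd ℂ) (gL k (l - μ - α)) := by
    calc c n k = ∑ l ∈ Finset.range L,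
        f (l : ZMod L) * (starRingEnd ℂ) (gL k ((l : ZMod L) - ((n * a k : ℕ) : ZMod L))) := hc n k
      _ = ∑ l : ZMod L, f l * (starRingEnd ℂ) (gL k (l - ((n * a k : ℕ) : ZMod L))) :=
          SlicqAux.sum_range_zmod
            (fun l : ZMod L => f l * (starRingEnd ℂ) (gL k (l - ((n * a k : ℕ) : ZMod L))))
      _ = ∑ l : ZMod L, f l * (starRingEnd ℂ) (gL k (l - μ - α)) := by
          refine Finset.sum_congr rfl fun l _ => ?_
          have hcast : l - ((n * a k : ℕ) : ZMod L) = l - μ - α := by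
            have hna : n * a k = m * N + ns * a k := by
              rw [hn, add_mul, mul_assoc, Nat.div_mul_cancel (ha k)]
            rw [hna, hμ, hα]; push_cast; ring
          rw [hcast]
  -- error decomposition
  set A : ZMod L → ℂ := fun l => (h0 (l - μ) + h0 (l - μ - (N : ZMod L)) - 1) *
      (starRingEnd ℂ) (gL k (l - μ - α)) with hA
  set B : ZMod L → ℂ := fun l => (h0 (l - μ) + h0 (l - μ - (N : ZMod L))) *
      (starRingEnd ℂ) (rest (l - μ - α)) with hB
  have key : cs m (ns + N / a k) k + cs (m + 1) ns k - c n k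
      = (∑ l : ZMod L, f l * A l) + (∑ l : ZMod L, f l * B l) := by
    rw [hs0, hs1, hcn, ← Finset.sum_add_distrib, ← Finset.sum_sub_distrib,
      ← Finset.sum_add_distrib]
    refine Finset.sum_congr rfl fun l _ => ?_
    rw [per_split (l - μ - α), map_add]
    simp only [hA, hB]
    ring
  -- the two norm identifications
  have hnA : norm2 L A = norm2 L (fun l : ZMod L =>
      (1 - h0 l - h0 (l - (N : ZMod L))) * gL k (l - α)) := by
    rw [← SlicqAux.norm2_comp_sub
      (fun l : ZMod L => (1 - h0 l - h0 (l - (N : ZMod L))) * gL k (l - α)) μ]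
    apply SlicqAux.norm2_congr_abs
    intro l
    show ‖A l‖ = ‖
      (1 - h0 (l - μ) - h0 (l - μ - (N : ZMod L))) * gL k (l - μ - α)‖
    simp only [hA]
    rw [norm_mul, norm_mul, Complex.norm_conj]
    congr 1
    rw [show (h0 (l - μ) + h0 (l - μ - (N : ZMod L)) - 1)
        = -(1 - h0 (l - μ) - h0 (l - μ - (N : ZMod L))) from by ring]
    exact norm_neg _
  have hnB : norm2 L B = norm2 L (fun l : ZMod L =>
      (h0 l + h0 (l - (N : ZMod L))) *
        ∑ j ∈ Finset.Ico 1 (L / (2 * N)),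
          gL k (l - ((ns * a k + 2 * j * N : ℕ) : ZMod L))) := by
    rw [← SlicqAux.norm2_comp_sub
      (fun l : ZMod L => (h0 l + h0 (l - (N : ZMod L))) *
        ∑ j ∈ Finset.Ico 1 (L / (2 * N)),
          gL k (l - ((ns * a k + 2 * j * N : ℕ) : ZMod L))) μ]
    apply SlicqAux.norm2_congr_abs
    intro l
    show ‖B l‖ = ‖
      (h0 (l - μ) + h0 (l - μ - (N : ZMod L))) *
        ∑ j ∈ Finset.Ico 1 (L / (2 * N)),
          gL k (l - μ - ((ns * a k + 2 * j * N : ℕ) : ZMod L))‖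
    have hrestval : (∑ j ∈ Finset.Ico 1 (L / (2 * N)),
        gL k (l - μ - ((ns * a k + 2 * j * N : ℕ) : ZMod L))) = rest (l - μ - α) := by
      calc (∑ j ∈ Finset.Ico 1 (L / (2 * N)),
          gL k (l - μ - ((ns * a k + 2 * j * N : ℕ) : ZMod L)))
          = ∑ j ∈ Finset.Ico 1 (L / (2 * N)),
              gL k ((l - μ - α) - ((2 * j * N : ℕ) : ZMod L)) := by
            refine Finset.sum_congr rfl fun j _ => ?_
            congr 1
            rw [hα]; push_cast; ring
        _ = ∑ j ∈ Finset.Ico 1 (L / (2 * N)),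
              gL k ((l - μ - α) + ((2 * j * N : ℕ) : ZMod L)) :=
            (SlicqAux.sum_Ico_reflect hdvd (gL k) (l - μ - α)).symm
        _ = rest (l - μ - α) := rfl
    rw [hrestval]
    simp only [hB]
    rw [norm_mul, norm_mul, Complex.norm_conj]
  -- conclude by Cauchy–Schwarz
  rw [key]
  calc ‖(∑ l : ZMod L, f l * A l) + ∑ l : ZMod L, f l * B l‖
      ≤ ‖∑ l : ZMod L, f l * A l‖ + ‖∑ l : ZMod L, f l * B l‖ :=
        norm_add_le _ _
    _ ≤ norm2 L f * norm2 L A + norm2 L f * norm2 L B :=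
        add_le_add (SlicqAux.abs_sum_mul_le f A) (SlicqAux.abs_sum_mul_le f B)
    _ = norm2 L f * (norm2 L (fun l : ZMod L =>
            (1 - h0 l - h0 (l - (N : ZMod L))) * gL k (l - α))
          + norm2 L (fun l : ZMod L =>
              (h0 l + h0 (l - (N : ZMod L))) *
                ∑ j ∈ Finset.Ico 1 (L / (2 * N)),
                  gL k (l - ((ns * a k + 2 * j * N : ℕ) : ZMod L)))) := by
        rw [hnA, hnB, mul_add]
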